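/- Define Φ(r) = −((n−1)/(4r²))[(n−3)(1 − r² coth² r) − 2r²] for r > 0 and integer n ≥ 2. Then: (i) for n = 2, sup_{r>0} Φ(r) = 1/3 and inf_{r>0} Φ(r) = 1/4; (ii) for n = 3, Φ(r) = 1 for all r > 0; (iii) for n > 3, sup_{r>0} Φ(r) = (n−1)²/4 and inf_{r>0} Φ(r) = n(n−1)/6. -/

import Mathlib

open Real

section Aux

open Filter Set Topology

lemma aux_nonneg_of_deriv {f f' : ℝ → ℝ} (hf : ∀ x, HasDerivAt f (f' x) x)
    (h0 : f 0 = 0) (hd : ∀ x, 0 ≤ x → 0 ≤ f' x) {x : ℝ} (hx : 0 ≤ x) : 0 ≤ f x := by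
  have hdiff : Differentiable ℝ f := fun y => (hf y).differentiableAt
  have hmono : MonotoneOn f (Set.Ici 0) := by
    apply monotoneOn_of_deriv_nonneg (convex_Ici 0) hdiff.continuous.continuousOn
      hdiff.differentiableOn
    intro y hy
    rw [interior_Ici, Set.mem_Ioi] at hy
    rw [(hf y).deriv]
    exact hd y hy.le
  have := hmono Set.self_mem_Ici (Set.mem_Ici.2 hx) hx
  linarith [h0 ▸ this]

lemma aux_L0 {x : ℝ} (hx : 0 ≤ x) : Real.sinh x ≤ x * Real.cosh x := by
  have h : 0 ≤ x * Real.cosh x - Real.sinh x := by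
    refine aux_nonneg_of_deriv (f := fun y => y * Real.cosh y - Real.sinh y)
      (f' := fun y => y * Real.sinh y) (fun y => ?_) (by simp)
      (fun y hy => mul_nonneg hy (Real.sinh_nonneg_iff.2 hy)) hx
    have h := ((hasDerivAt_id' y).mul (Real.hasDerivAt_cosh y)).sub (Real.hasDerivAt_sinh y)
    refine h.congr_deriv ?_
    ring
  linarith

lemma aux_L1 {x : ℝ} (hx : 0 ≤ x) : Real.cosh x ≤ 1 + x ^ 2 / 2 * Real.cosh x := by
  have h : 0 ≤ 1 + x ^ 2 / 2 * Real.cosh x - Real.cosh x := by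
    refine aux_nonneg_of_deriv (f := fun y => 1 + y ^ 2 / 2 * Real.cosh y - Real.cosh y)
      (f' := fun y => (y * Real.cosh y - Real.sinh y) + y ^ 2 / 2 * Real.sinh y)
      (fun y => ?_) (by norm_num) (fun y hy => ?_) hx
    · have h := ((((hasDerivAt_pow 2 y).div_const 2).mul (Real.hasDerivAt_cosh y)).const_add
        1).sub (Real.hasDerivAt_cosh y)
      refine h.congr_deriv ?_
      push_cast; ring
    · have h1 := aux_L0 hy
      have h2 := Real.sinh_nonneg_iff.2 hy
      nlinarith
  linarith

lemma aux_L2 {x : ℝ} (hx : 0 ≤ x) : Real.sinh x ≤ x + x ^ 3 / 6 * Real.cosh x := by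
  have h : 0 ≤ x + x ^ 3 / 6 * Real.cosh x - Real.sinh x := by
    refine aux_nonneg_of_deriv (f := fun y => y + y ^ 3 / 6 * Real.cosh y - Real.sinh y)
      (f' := fun y => (1 + y ^ 2 / 2 * Real.cosh y - Real.cosh y) + y ^ 3 / 6 * Real.sinh y)
      (fun y => ?_) (by norm_num) (fun y hy => ?_) hx
    · have h := (((hasDerivAt_id' y).add
        (((hasDerivAt_pow 3 y).div_const 6).mul (Real.hasDerivAt_cosh y)))).sub
        (Real.hasDerivAt_sinh y)
      refine h.congr_deriv ?_
      push_cast; ring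
    · have h1 := aux_L1 hy
      have h2 := Real.sinh_nonneg_iff.2 hy
      have h3 : 0 ≤ y ^ 3 / 6 * Real.sinh y := mul_nonneg (by positivity) h2
      linarith
  linarith

lemma aux_L3 {x : ℝ} (hx : 0 ≤ x) :
    Real.cosh x ≤ 1 + x ^ 2 / 2 + x ^ 4 / 24 * Real.cosh x := by
  have h : 0 ≤ 1 + x ^ 2 / 2 + x ^ 4 / 24 * Real.cosh x - Real.cosh x := by
    refine aux_nonneg_of_deriv
      (f := fun y => 1 + y ^ 2 / 2 + y ^ 4 / 24 * Real.cosh y - Real.cosh y)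
      (f' := fun y => (y + y ^ 3 / 6 * Real.cosh y - Real.sinh y) + y ^ 4 / 24 * Real.sinh y)
      (fun y => ?_) (by norm_num) (fun y hy => ?_) hx
    · have h := ((((hasDerivAt_pow 2 y).div_const 2).const_add 1).add
        (((hasDerivAt_pow 4 y).div_const 24).mul (Real.hasDerivAt_cosh y))).sub
        (Real.hasDerivAt_cosh y)
      refine h.congr_deriv ?_
      push_cast; ring
    · have h1 := aux_L2 hy
      have h2 := Real.sinh_nonneg_iff.2 hy
      have h3 : 0 ≤ y ^ 4 / 24 * Real.sinh y := mul_nonneg (by positivity) h2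
      linarith
  linarith

lemma aux_L4 {x : ℝ} (hx : 0 ≤ x) :
    Real.sinh x ≤ x + x ^ 3 / 6 + x ^ 5 / 120 * Real.cosh x := by
  have h : 0 ≤ x + x ^ 3 / 6 + x ^ 5 / 120 * Real.cosh x - Real.sinh x := by
    refine aux_nonneg_of_deriv
      (f := fun y => y + y ^ 3 / 6 + y ^ 5 / 120 * Real.cosh y - Real.sinh y)
      (f' := fun y => (1 + y ^ 2 / 2 + y ^ 4 / 24 * Real.cosh y - Real.cosh y)
        + y ^ 5 / 120 * Real.sinh y)
      (fun y => ?_) (by norm_num) (fun y hy => ?_) hx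
    · have h := (((hasDerivAt_id' y).add ((hasDerivAt_pow 3 y).div_const 6)).add
        (((hasDerivAt_pow 5 y).div_const 120).mul (Real.hasDerivAt_cosh y))).sub
        (Real.hasDerivAt_sinh y)
      refine h.congr_deriv ?_
      push_cast; ring
    · have h1 := aux_L3 hy
      have h2 := Real.sinh_nonneg_iff.2 hy
      have h3 : 0 ≤ y ^ 5 / 120 * Real.sinh y := mul_nonneg (by positivity) h2
      linarith
  linarith

lemma aux_L5 {x : ℝ} (hx : 0 ≤ x) :
    Real.cosh x ≤ 1 + x ^ 2 / 2 + x ^ 4 / 24 + x ^ 6 / 720 * Real.cosh x := by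
  have h : 0 ≤ 1 + x ^ 2 / 2 + x ^ 4 / 24 + x ^ 6 / 720 * Real.cosh x - Real.cosh x := by
    refine aux_nonneg_of_deriv
      (f := fun y => 1 + y ^ 2 / 2 + y ^ 4 / 24 + y ^ 6 / 720 * Real.cosh y - Real.cosh y)
      (f' := fun y => (y + y ^ 3 / 6 + y ^ 5 / 120 * Real.cosh y - Real.sinh y)
        + y ^ 6 / 720 * Real.sinh y)
      (fun y => ?_) (by norm_num) (fun y hy => ?_) hx
    · have h := (((((hasDerivAt_pow 2 y).div_const 2).const_add 1).add
        ((hasDerivAt_pow 4 y).div_const 24)).add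
        (((hasDerivAt_pow 6 y).div_const 720).mul (Real.hasDerivAt_cosh y))).sub
        (Real.hasDerivAt_cosh y)
      refine h.congr_deriv ?_
      push_cast; ring
    · have h1 := aux_L4 hy
      have h2 := Real.sinh_nonneg_iff.2 hy
      have h3 : 0 ≤ y ^ 6 / 720 * Real.sinh y := mul_nonneg (by positivity) h2
      linarith
  linarith

lemma aux_L6 {x : ℝ} (hx : 0 ≤ x) :
    Real.sinh x ≤ x + x ^ 3 / 6 + x ^ 5 / 120 + x ^ 7 / 5040 * Real.cosh x := by
  have h : 0 ≤ x + x ^ 3 / 6 + x ^ 5 / 120 + x ^ 7 / 5040 * Real.cosh x - Real.sinh x := by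
    refine aux_nonneg_of_deriv
      (f := fun y => y + y ^ 3 / 6 + y ^ 5 / 120 + y ^ 7 / 5040 * Real.cosh y - Real.sinh y)
      (f' := fun y => (1 + y ^ 2 / 2 + y ^ 4 / 24 + y ^ 6 / 720 * Real.cosh y - Real.cosh y)
        + y ^ 7 / 5040 * Real.sinh y)
      (fun y => ?_) (by norm_num) (fun y hy => ?_) hx
    · have h := ((((hasDerivAt_id' y).add ((hasDerivAt_pow 3 y).div_const 6)).add
        ((hasDerivAt_pow 5 y).div_const 120)).add
        (((hasDerivAt_pow 7 y).div_const 5040).mul (Real.hasDerivAt_cosh y))).sub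
        (Real.hasDerivAt_sinh y)
      refine h.congr_deriv ?_
      push_cast; ring
    · have h1 := aux_L5 hy
      have h2 := Real.sinh_nonneg_iff.2 hy
      have h3 : 0 ≤ y ^ 7 / 5040 * Real.sinh y := mul_nonneg (by positivity) h2
      linarith
  linarith

lemma aux_L7 {x : ℝ} (hx : 0 ≤ x) :
    Real.cosh x ≤ 1 + x ^ 2 / 2 + x ^ 4 / 24 + x ^ 6 / 720 + x ^ 8 / 40320 * Real.cosh x := by
  have h : 0 ≤ 1 + x ^ 2 / 2 + x ^ 4 / 24 + x ^ 6 / 720 + x ^ 8 / 40320 * Real.cosh x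
      - Real.cosh x := by
    refine aux_nonneg_of_deriv
      (f := fun y => 1 + y ^ 2 / 2 + y ^ 4 / 24 + y ^ 6 / 720 + y ^ 8 / 40320 * Real.cosh y
        - Real.cosh y)
      (f' := fun y => (y + y ^ 3 / 6 + y ^ 5 / 120 + y ^ 7 / 5040 * Real.cosh y - Real.sinh y)
        + y ^ 8 / 40320 * Real.sinh y)
      (fun y => ?_) (by norm_num) (fun y hy => ?_) hx
    · have h := ((((((hasDerivAt_pow 2 y).div_const 2).const_add 1).add
        ((hasDerivAt_pow 4 y).div_const 24)).add
        ((hasDerivAt_pow 6 y).div_const 720)).add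
        (((hasDerivAt_pow 8 y).div_const 40320).mul (Real.hasDerivAt_cosh y))).sub
        (Real.hasDerivAt_cosh y)
      refine h.congr_deriv ?_
      push_cast; ring
    · have h1 := aux_L6 hy
      have h2 := Real.sinh_nonneg_iff.2 hy
      have h3 : 0 ≤ y ^ 8 / 40320 * Real.sinh y := mul_nonneg (by positivity) h2
      linarith
  linarith

lemma aux_M1 {x : ℝ} (hx : 0 ≤ x) : 1 + x ^ 2 / 2 ≤ Real.cosh x := by
  have h : 0 ≤ Real.cosh x - (1 + x ^ 2 / 2) := by
    refine aux_nonneg_of_deriv (f := fun y => Real.cosh y - (1 + y ^ 2 / 2))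
      (f' := fun y => Real.sinh y - y) (fun y => ?_) (by simp)
      (fun y hy => by linarith [Real.self_le_sinh_iff.2 hy]) hx
    have h := (Real.hasDerivAt_cosh y).sub (((hasDerivAt_pow 2 y).div_const 2).const_add 1)
    refine h.congr_deriv ?_
    push_cast; ring
  linarith

lemma aux_M2 {x : ℝ} (hx : 0 ≤ x) : x + x ^ 3 / 6 ≤ Real.sinh x := by
  have h : 0 ≤ Real.sinh x - (x + x ^ 3 / 6) := by
    refine aux_nonneg_of_deriv (f := fun y => Real.sinh y - (y + y ^ 3 / 6))
      (f' := fun y => Real.cosh y - (1 + y ^ 2 / 2)) (fun y => ?_)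
      (by norm_num) (fun y hy => by linarith [aux_M1 hy]) hx
    have h := (Real.hasDerivAt_sinh y).sub
      ((hasDerivAt_id' y).add ((hasDerivAt_pow 3 y).div_const 6))
    refine h.congr_deriv ?_
    push_cast; ring
  linarith

lemma aux_cosh_small {x : ℝ} (hx : 0 ≤ x) (hx1 : x ≤ 1) : Real.cosh x ≤ 1 + x ^ 2 := by
  have h1 := aux_L1 hx
  have h2 := Real.one_le_cosh x
  have key : Real.cosh x * (2 - x ^ 2) ≤ 2 := by nlinarith
  have h3 : (0:ℝ) < 2 - x ^ 2 := by nlinarith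
  have h4 : x ^ 2 ≤ 1 := by nlinarith
  have h5 : x ^ 4 ≤ x ^ 2 := by nlinarith [sq_nonneg x]
  nlinarith [key, h3, h5]

lemma aux_key {r : ℝ} (hr : 0 ≤ r) :
    3 * (Real.sinh r ^ 2 - r ^ 2) ≤ r ^ 2 * Real.sinh r ^ 2 := by
  set x := 2 * r with hxdef
  have hx : 0 ≤ x := by positivity
  have hs : Real.sinh r ^ 2 = (Real.cosh x - 1) / 2 := by
    rw [hxdef, Real.cosh_two_mul, Real.cosh_sq]; ring
  have hr2 : r = x / 2 := by rw [hxdef]; ring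
  rw [hs, hr2]
  have hc1 : 1 ≤ Real.cosh x := Real.one_le_cosh x
  rcases le_or_gt 12 (x ^ 2) with h12 | h12
  · nlinarith [sq_nonneg x]
  · have h7 := aux_L7 hx
    nlinarith [sq_nonneg x, sq_nonneg (x ^ 2), sq_nonneg (x ^ 3), sq_nonneg (x ^ 4),
      mul_nonneg (mul_nonneg hx hx) hx]

lemma aux_G_le_one {r : ℝ} (hr : 0 < r) :
    (Real.cosh r / Real.sinh r) ^ 2 - 1 / r ^ 2 ≤ 1 := by
  have hs : 0 < Real.sinh r := Real.sinh_pos_iff.2 hr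
  have hrs : r ≤ Real.sinh r := Real.self_le_sinh_iff.2 hr.le
  have e : (Real.cosh r / Real.sinh r) ^ 2 - 1 / r ^ 2 - 1
      = (r ^ 2 - Real.sinh r ^ 2) / (r ^ 2 * Real.sinh r ^ 2) := by
    rw [div_pow, Real.cosh_sq]
    field_simp
    ring
  have hnum : r ^ 2 - Real.sinh r ^ 2 ≤ 0 := by nlinarith
  have hden : (0:ℝ) < r ^ 2 * Real.sinh r ^ 2 := by positivity
  have h := div_nonpos_of_nonpos_of_nonneg hnum hden.le
  linarith [e ▸ h]

lemma aux_G_ge {r : ℝ} (hr : 0 < r) :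
    2 / 3 ≤ (Real.cosh r / Real.sinh r) ^ 2 - 1 / r ^ 2 := by
  have hs : 0 < Real.sinh r := Real.sinh_pos_iff.2 hr
  have hkey := aux_key hr.le
  have e : (Real.cosh r / Real.sinh r) ^ 2 - 1 / r ^ 2 - 2 / 3
      = (r ^ 2 * Real.sinh r ^ 2 - 3 * (Real.sinh r ^ 2 - r ^ 2))
        / (3 * (r ^ 2 * Real.sinh r ^ 2)) := by
    rw [div_pow, Real.cosh_sq]
    field_simp
    ring
  have hden : (0:ℝ) < 3 * (r ^ 2 * Real.sinh r ^ 2) := by positivity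
  have h := div_nonneg (by linarith : (0:ℝ) ≤ r ^ 2 * Real.sinh r ^ 2
    - 3 * (Real.sinh r ^ 2 - r ^ 2)) hden.le
  linarith [e ▸ h]

lemma aux_G_upper_small {r : ℝ} (hr : 0 < r) (hr1 : r ≤ 1) :
    (Real.cosh r / Real.sinh r) ^ 2 - 1 / r ^ 2 ≤ 1 - 1 / (3 * (1 + r ^ 2) ^ 2) := by
  have hs : 0 < Real.sinh r := Real.sinh_pos_iff.2 hr
  have hlow : r ^ 2 + r ^ 4 / 3 ≤ Real.sinh r ^ 2 := by
    have h := aux_M2 hr.le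
    have h2 : (r + r ^ 3 / 6) ^ 2 ≤ Real.sinh r ^ 2 := pow_le_pow_left₀ (by positivity) h 2
    nlinarith [pow_nonneg hr.le 6]
  have hup : Real.sinh r ^ 2 ≤ r ^ 2 * (1 + r ^ 2) ^ 2 := by
    have h0 := aux_L0 hr.le
    have h1 := aux_cosh_small hr.le hr1
    have hc : 0 < Real.cosh r := Real.cosh_pos r
    have h2 : Real.sinh r ≤ r * (1 + r ^ 2) := le_trans h0 (by nlinarith)
    have h4 := pow_le_pow_left₀ hs.le h2 2
    nlinarith [h4]
  have e : (Real.cosh r / Real.sinh r) ^ 2 - 1 / r ^ 2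
      = 1 - (Real.sinh r ^ 2 - r ^ 2) / (r ^ 2 * Real.sinh r ^ 2) := by
    rw [div_pow, Real.cosh_sq]
    field_simp
    ring
  rw [e]
  have hfrac : 1 / (3 * (1 + r ^ 2) ^ 2)
      ≤ (Real.sinh r ^ 2 - r ^ 2) / (r ^ 2 * Real.sinh r ^ 2) := by
    have hd1 : (0:ℝ) < r ^ 2 * Real.sinh r ^ 2 := by positivity
    have hd2 : (0:ℝ) < 3 * (1 + r ^ 2) ^ 2 := by positivity
    rw [div_le_div_iff₀ hd2 hd1]
    have h3 : r ^ 4 / 3 ≤ Real.sinh r ^ 2 - r ^ 2 := by linarith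
    nlinarith [mul_le_mul_of_nonneg_right h3 hd2.le, mul_le_mul_of_nonneg_left hup (sq_nonneg r)]
  linarith

lemma aux_T_atTop :
    Filter.Tendsto (fun r : ℝ => (Real.cosh r / Real.sinh r) ^ 2 - 1 / r ^ 2)
      Filter.atTop (nhds 1) := by
  have hsinh : Filter.Tendsto Real.sinh Filter.atTop Filter.atTop :=
    Filter.tendsto_atTop_mono'
      Filter.atTop
      (Filter.eventually_atTop.2 ⟨0, fun x hx => Real.self_le_sinh_iff.2 hx⟩)
      Filter.tendsto_id
  have h1 : Filter.Tendsto (fun r : ℝ => (Real.sinh r)⁻¹) Filter.atTop (nhds 0) :=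
    hsinh.inv_tendsto_atTop
  have h2 : Filter.Tendsto (fun r : ℝ => r⁻¹) Filter.atTop (nhds 0) :=
    tendsto_inv_atTop_zero
  have h3 : Filter.Tendsto (fun r : ℝ => 1 + ((Real.sinh r)⁻¹) ^ 2 - (r⁻¹) ^ 2)
      Filter.atTop (nhds (1 + (0:ℝ) ^ 2 - (0:ℝ) ^ 2)) :=
    (tendsto_const_nhds.add (h1.pow 2)).sub (h2.pow 2)
  norm_num at h3
  refine h3.congr' ?_
  filter_upwards [Filter.eventually_gt_atTop (0:ℝ)] with r hr
  have hs : Real.sinh r ≠ 0 := ne_of_gt (Real.sinh_pos_iff.2 hr)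
  have hrne : r ≠ 0 := ne_of_gt hr
  rw [div_pow, Real.cosh_sq]
  field_simp

lemma aux_T_zero :
    Filter.Tendsto (fun r : ℝ => (Real.cosh r / Real.sinh r) ^ 2 - 1 / r ^ 2)
      (nhdsWithin 0 (Set.Ioi 0)) (nhds (2/3)) := by
  have hmem : Set.Ioo (0:ℝ) 1 ∈ nhdsWithin (0:ℝ) (Set.Ioi 0) :=
    Ioo_mem_nhdsGT (by norm_num)
  have hupper : Filter.Tendsto (fun r : ℝ => 1 - 1 / (3 * (1 + r ^ 2) ^ 2))
      (nhdsWithin 0 (Set.Ioi 0)) (nhds (2/3)) := by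
    have hc : ContinuousAt (fun r : ℝ => 1 - 1 / (3 * (1 + r ^ 2) ^ 2)) 0 := by
      apply ContinuousAt.sub continuousAt_const
      exact ContinuousAt.div continuousAt_const (by fun_prop) (by norm_num)
    have h : Filter.Tendsto (fun r : ℝ => 1 - 1 / (3 * (1 + r ^ 2) ^ 2))
        (nhdsWithin 0 (Set.Ioi 0)) (nhds (1 - 1 / (3 * (1 + (0:ℝ) ^ 2) ^ 2))) :=
      hc.tendsto.mono_left nhdsWithin_le_nhds
    norm_num at h
    exact h.congr (fun r => by
      have hne : ((1:ℝ) + r ^ 2) ^ 2 ≠ 0 := by positivity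
      field_simp)
  refine tendsto_of_tendsto_of_tendsto_of_le_of_le' tendsto_const_nhds hupper ?_ ?_
  · filter_upwards [self_mem_nhdsWithin] with r hr
    exact aux_G_ge hr
  · filter_upwards [hmem] with r hr
    exact aux_G_upper_small hr.1 hr.2.le

lemma aux_ciSup (f : ℝ → ℝ) (L : ℝ) (l : Filter ℝ) [l.NeBot] (hl : ∀ᶠ r in l, 0 < r)
    (hub : ∀ r : ℝ, 0 < r → f r ≤ L) (ht : Filter.Tendsto f l (nhds L)) :
    (⨆ r : Set.Ioi (0:ℝ), f r) = L := by
  haveI : Nonempty (Set.Ioi (0:ℝ)) := ⟨⟨1, by norm_num⟩⟩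
  refine IsLUB.ciSup_eq ⟨?_, ?_⟩
  · rintro x ⟨⟨r, hr⟩, rfl⟩
    exact hub r hr
  · intro b hb
    refine le_of_tendsto ht ?_
    filter_upwards [hl] with r hr
    exact hb ⟨⟨r, hr⟩, rfl⟩

lemma aux_ciInf (f : ℝ → ℝ) (L : ℝ) (l : Filter ℝ) [l.NeBot] (hl : ∀ᶠ r in l, 0 < r)
    (hlb : ∀ r : ℝ, 0 < r → L ≤ f r) (ht : Filter.Tendsto f l (nhds L)) :
    (⨅ r : Set.Ioi (0:ℝ), f r) = L := by
  haveI : Nonempty (Set.Ioi (0:ℝ)) := ⟨⟨1, by norm_num⟩⟩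
  refine IsGLB.ciInf_eq ⟨?_, ?_⟩
  · rintro x ⟨⟨r, hr⟩, rfl⟩
    exact hlb r hr
  · intro b hb
    refine ge_of_tendsto ht ?_
    filter_upwards [hl] with r hr
    exact hb ⟨⟨r, hr⟩, rfl⟩

end Aux

theorem stmt_14 (n : ℕ) (hn : 2 ≤ n) :
    let Φ : ℝ → ℝ := fun r =>
      -(((n : ℝ) - 1) / (4 * r ^ 2)) *
        (((n : ℝ) - 3) * (1 - r ^ 2 * (Real.cosh r / Real.sinh r) ^ 2) - 2 * r ^ 2)
    (n = 2 → (⨆ r : Set.Ioi (0:ℝ), Φ r) = 1/3 ∧ (⨅ r : Set.Ioi (0:ℝ), Φ r) = 1/4) ∧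
    (n = 3 → ∀ r > (0:ℝ), Φ r = 1) ∧
    (3 < n → (⨆ r : Set.Ioi (0:ℝ), Φ r) = ((n : ℝ) - 1) ^ 2 / 4 ∧
      (⨅ r : Set.Ioi (0:ℝ), Φ r) = (n : ℝ) * ((n : ℝ) - 1) / 6) := by
  intro Φ
  have hident : ∀ r : ℝ, 0 < r → Φ r = (((n:ℝ) - 1) / 4) *
      (((n:ℝ) - 3) * ((Real.cosh r / Real.sinh r) ^ 2 - 1 / r ^ 2) + 2) := by
    intro r hr
    have hs : Real.sinh r ≠ 0 := ne_of_gt (Real.sinh_pos_iff.2 hr)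
    have hrne : r ≠ 0 := ne_of_gt hr
    show -(((n : ℝ) - 1) / (4 * r ^ 2)) *
        (((n : ℝ) - 3) * (1 - r ^ 2 * (Real.cosh r / Real.sinh r) ^ 2) - 2 * r ^ 2) = _
    field_simp
    ring
  refine ⟨?_, ?_, ?_⟩
  · rintro rfl
    constructor
    · refine aux_ciSup Φ (1/3) (nhdsWithin 0 (Set.Ioi 0)) ?_ ?_ ?_
      · filter_upwards [self_mem_nhdsWithin] with r hr using hr
      · intro r hr
        rw [hident r hr]
        have h := aux_G_ge hr
        push_cast
        linarith
      · have h := ((tendsto_const_nhds : Filter.Tendsto (fun _ : ℝ => (2:ℝ))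
            (nhdsWithin 0 (Set.Ioi 0)) (nhds 2)).sub aux_T_zero).const_mul (1/4 : ℝ)
        have h2 : Filter.Tendsto (fun r : ℝ => (1/4 : ℝ) *
            ((2:ℝ) - ((Real.cosh r / Real.sinh r) ^ 2 - 1 / r ^ 2)))
            (nhdsWithin 0 (Set.Ioi 0)) (nhds (1/3)) := by
          convert h using 2
          norm_num
        refine h2.congr' ?_
        filter_upwards [self_mem_nhdsWithin] with r hr
        rw [hident r hr]
        push_cast
        ring
    · refine aux_ciInf Φ (1/4) Filter.atTop ?_ ?_ ?_
      · exact Filter.eventually_gt_atTop 0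
      · intro r hr
        rw [hident r hr]
        have h := aux_G_le_one hr
        push_cast
        linarith
      · have h := ((tendsto_const_nhds : Filter.Tendsto (fun _ : ℝ => (2:ℝ))
            Filter.atTop (nhds 2)).sub aux_T_atTop).const_mul (1/4 : ℝ)
        have h2 : Filter.Tendsto (fun r : ℝ => (1/4 : ℝ) *
            ((2:ℝ) - ((Real.cosh r / Real.sinh r) ^ 2 - 1 / r ^ 2)))
            Filter.atTop (nhds (1/4)) := by
          convert h using 2
          norm_num
        refine h2.congr' ?_
        filter_upwards [Filter.eventually_gt_atTop (0:ℝ)] with r hr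
        rw [hident r hr]
        push_cast
        ring
  · rintro rfl r hr
    have hs : Real.sinh r ≠ 0 := ne_of_gt (Real.sinh_pos_iff.2 hr)
    have hrne : r ≠ 0 := ne_of_gt hr
    show -((((3:ℕ) : ℝ) - 1) / (4 * r ^ 2)) *
        ((((3:ℕ) : ℝ) - 3) * (1 - r ^ 2 * (Real.cosh r / Real.sinh r) ^ 2) - 2 * r ^ 2) = 1
    push_cast
    field_simp
    ring
  · intro hn3
    have hm : (3:ℝ) < (n:ℝ) := by exact_mod_cast hn3
    constructor
    · refine aux_ciSup Φ (((n:ℝ) - 1) ^ 2 / 4) Filter.atTop ?_ ?_ ?_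
      · exact Filter.eventually_gt_atTop 0
      · intro r hr
        rw [hident r hr]
        have hG := aux_G_le_one hr
        nlinarith [mul_le_mul_of_nonneg_left (mul_le_mul_of_nonneg_left hG
          (by linarith : (0:ℝ) ≤ (n:ℝ) - 3)) (by linarith : (0:ℝ) ≤ ((n:ℝ) - 1) / 4)]
      · have h := ((aux_T_atTop.const_mul ((n:ℝ) - 3)).add (tendsto_const_nhds :
          Filter.Tendsto (fun _ : ℝ => (2:ℝ)) Filter.atTop (nhds 2))).const_mul
          (((n:ℝ) - 1) / 4)
        have h2 : Filter.Tendsto (fun r : ℝ => (((n:ℝ) - 1) / 4) *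
            (((n:ℝ) - 3) * ((Real.cosh r / Real.sinh r) ^ 2 - 1 / r ^ 2) + (2:ℝ)))
            Filter.atTop (nhds (((n:ℝ) - 1) ^ 2 / 4)) := by
          convert h using 2
          ring
        refine h2.congr' ?_
        filter_upwards [Filter.eventually_gt_atTop (0:ℝ)] with r hr
        exact (hident r hr).symm
    · refine aux_ciInf Φ ((n:ℝ) * ((n:ℝ) - 1) / 6) (nhdsWithin 0 (Set.Ioi 0)) ?_ ?_ ?_
      · filter_upwards [self_mem_nhdsWithin] with r hr using hr
      · intro r hr
        rw [hident r hr]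
        have hG := aux_G_ge hr
        nlinarith [mul_le_mul_of_nonneg_left (mul_le_mul_of_nonneg_left hG
          (by linarith : (0:ℝ) ≤ (n:ℝ) - 3)) (by linarith : (0:ℝ) ≤ ((n:ℝ) - 1) / 4)]
      · have h := ((aux_T_zero.const_mul ((n:ℝ) - 3)).add (tendsto_const_nhds :
          Filter.Tendsto (fun _ : ℝ => (2:ℝ)) (nhdsWithin 0 (Set.Ioi 0)) (nhds 2))).const_mul
          (((n:ℝ) - 1) / 4)
        have h2 : Filter.Tendsto (fun r : ℝ => (((n:ℝ) - 1) / 4) *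
            (((n:ℝ) - 3) * ((Real.cosh r / Real.sinh r) ^ 2 - 1 / r ^ 2) + (2:ℝ)))
            (nhdsWithin 0 (Set.Ioi 0)) (nhds ((n:ℝ) * ((n:ℝ) - 1) / 6)) := by
          convert h using 2
          ring
        refine h2.congr' ?_
        filter_upwards [self_mem_nhdsWithin] with r hr
        exact (hident r hr).symm
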